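/- For the quadratic Hopfield interaction U(s, θ) := −(1/2) sᵀθs with θ ∈ ℝ^{n×n} symmetric, the gradient is ∇ₛU(s, θ) = −θs, and for the full block energy E(s, θ, x) = G(s) − ⟪s, x⟫ − (1/2)sᵀθs with ∇G = σ⁻¹ (σ invertible, differentiable), a point s⋆ is a critical point of s ↦ E(s, θ, x) iff s⋆ = σ(x + θ s⋆). Moreover, the Hessian of E in s at any s equals D(∇G)(s) − θ, which is invertible whenever all eigenvalues of the symmetric matrix θ are strictly less than the smallest eigenvalue of the symmetric positive-definite matrix D(∇G)(s). -/

import Mathlib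

open scoped RealInnerProductSpace

noncomputable section

abbrev Euc (n : ℕ) := EuclideanSpace ℝ (Fin n)

section Aux

variable {n : ℕ}

lemma hasGradientAt_of_hasFDerivAt {f : Euc n → ℝ} {g s : Euc n}
    (h : HasFDerivAt f ((InnerProductSpace.toDual ℝ (Euc n)) g) s) :
    HasGradientAt f g s :=
  hasGradientAt_iff_hasFDerivAt.mpr h

lemma hasGradientAt_quad (A : Euc n →L[ℝ] Euc n) (hA : IsSelfAdjoint A)
    (c : ℝ) (s : Euc n) :
    HasGradientAt (fun t => c * ⟪t, A t⟫) ((2 * c) • A s) s := by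
  apply hasGradientAt_of_hasFDerivAt
  have h1 : HasFDerivAt (fun t : Euc n => ⟪t, A t⟫)
      ((fderivInnerCLM ℝ (s, A s)).comp
        ((ContinuousLinearMap.id ℝ (Euc n)).prod A)) s :=
    (hasFDerivAt_id s).inner ℝ (A.hasFDerivAt)
  have h2 := h1.const_mul c
  refine h2.congr_fderiv ?_
  ext v
  simp only [InnerProductSpace.toDual_apply_apply, ContinuousLinearMap.smul_apply,
    ContinuousLinearMap.comp_apply, ContinuousLinearMap.prod_apply,
    ContinuousLinearMap.coe_id', id_eq, fderivInnerCLM_apply,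
    ContinuousLinearMap.coe_smul', Pi.smul_apply, smul_eq_mul]
  have hsym : ⟪A s, v⟫ = ⟪s, A v⟫ := hA.isSymmetric s v
  have hvs : ⟪v, A s⟫ = ⟪s, A v⟫ := (real_inner_comm _ _).trans hsym
  rw [real_inner_smul_left, hsym, hvs]
  ring

lemma hasGradientAt_E {G : Euc n → ℝ} (hG : ContDiff ℝ 2 G)
    (A : Euc n →L[ℝ] Euc n) (hA : IsSelfAdjoint A) (x s : Euc n) :
    HasGradientAt (fun t => G t - ⟪t, x⟫ + -(1/2 : ℝ) * ⟪t, A t⟫)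
      (gradient G s - x - A s) s := by
  apply hasGradientAt_of_hasFDerivAt
  have hGd : HasFDerivAt G ((InnerProductSpace.toDual ℝ (Euc n)) (gradient G s)) s := by
    have := ((hG.differentiable (by norm_num)) s).hasGradientAt
    exact hasGradientAt_iff_hasFDerivAt.mp this
  have hx : HasFDerivAt (fun t : Euc n => ⟪t, x⟫)
      ((InnerProductSpace.toDual ℝ (Euc n)) x) s := by
    have : HasFDerivAt (fun t : Euc n => ⟪x, t⟫) (innerSL ℝ x) s :=
      (innerSL ℝ x).hasFDerivAt
    have heq : (fun t : Euc n => ⟪t, x⟫) = fun t : Euc n => ⟪x, t⟫ := by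
      funext t; exact real_inner_comm x t
    rw [heq]
    convert this using 1
    ext t; simp [InnerProductSpace.toDual_apply_apply]
  have hq : HasFDerivAt (fun t : Euc n => -(1/2 : ℝ) * ⟪t, A t⟫)
      ((InnerProductSpace.toDual ℝ (Euc n)) (-(A s))) s := by
    have := hasGradientAt_quad A hA (-(1/2 : ℝ)) s
    have h2 : ((2 : ℝ) * -(1/2)) • A s = -(A s) := by norm_num
    rw [h2] at this
    exact hasGradientAt_iff_hasFDerivAt.mp this
  have := (hGd.sub hx).add hq
  refine this.congr_fderiv ?_
  ext v
  simp only [InnerProductSpace.toDual_apply_apply, ContinuousLinearMap.add_apply,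
    ContinuousLinearMap.sub_apply]
  rw [sub_sub, inner_sub_left, inner_add_left, inner_neg_left]
  ring

end Aux

/-- Deep Hopfield block: `U(s) = −(1/2)⟪s, A s⟫` (A symmetric) has
gradient `−A s`; critical points of `E(s,θ,x) = G(s) − ⟪s,x⟫ − (1/2)⟪s, A s⟫` are
exactly the fixed points `s⋆ = σ(x + A s⋆)`; the Hessian of `E` in `s` equals
`D(∇G)(s) − A`, invertible when all eigenvalues of `A` lie strictly below the
smallest eigenvalue of `D(∇G)(s)`. -/
theorem stmt_14 {n : ℕ}
    (A : Euc n →L[ℝ] Euc n) (hA : IsSelfAdjoint A)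
    (G : Euc n → ℝ) (hG : ContDiff ℝ 2 G)
    (hGsym : ∀ s, IsSelfAdjoint (fderiv ℝ (gradient G) s))
    (σ : Euc n → Euc n)
    (hσ₁ : Function.LeftInverse σ (gradient G))
    (hσ₂ : Function.RightInverse σ (gradient G))
    (U : Euc n → ℝ) (hU : ∀ s, U s = -(1/2 : ℝ) * ⟪s, A s⟫)
    (E : Euc n → Euc n → ℝ)
    (hE : ∀ s x, E s x = G s - ⟪s, x⟫ + U s)
    (x : Euc n) :
    (∀ s, gradient U s = -(A s)) ∧
    (∀ sstar : Euc n,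
      gradient (fun s => E s x) sstar = 0 ↔ sstar = σ (x + A sstar)) ∧
    (∀ s, fderiv ℝ (fun s' => gradient (fun s'' => E s'' x) s') s =
        fderiv ℝ (gradient G) s - A) ∧
    (∀ s, ∀ μ : ℝ,
      (∀ v, μ * ‖v‖ ^ 2 ≤ ⟪v, (fderiv ℝ (gradient G) s) v⟫) →
      (∀ v, v ≠ 0 → ⟪v, A v⟫ < μ * ‖v‖ ^ 2) →
      Function.Bijective
        (fderiv ℝ (fun s' => gradient (fun s'' => E s'' x) s') s)) := by
  -- gradient of E
  have hEfun : (fun s => E s x) = fun t => G t - ⟪t, x⟫ + -(1/2 : ℝ) * ⟪t, A t⟫ := by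
    funext t; rw [hE, hU]
  have hgradE : ∀ s, gradient (fun s' => E s' x) s = gradient G s - x - A s := by
    intro s
    rw [hEfun]
    exact (hasGradientAt_E hG A hA x s).gradient
  have hgradU : ∀ s, gradient U s = -(A s) := by
    intro s
    have hUfun : U = fun t => -(1/2 : ℝ) * ⟪t, A t⟫ := funext hU
    rw [hUfun]
    have := hasGradientAt_quad A hA (-(1/2 : ℝ)) s
    have h2 : ((2 : ℝ) * -(1/2)) • A s = -(A s) := by norm_num
    rw [h2] at this
    exact this.gradient
  refine ⟨hgradU, ?_, ?_, ?_⟩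
  · -- critical points
    intro sstar
    rw [hgradE]
    constructor
    · intro h
      have h' : gradient G sstar = x + A sstar := by
        rw [sub_sub, sub_eq_zero] at h; exact h
      calc sstar = σ (gradient G sstar) := (hσ₁ sstar).symm
        _ = σ (x + A sstar) := by rw [h']
    · intro h
      have h' : gradient G sstar = x + A sstar := by
        conv_lhs => rw [h]
        exact hσ₂ (x + A sstar)
      rw [h', sub_sub, sub_self]
  · -- Hessian
    intro s
    have hgradGdiff : Differentiable ℝ (gradient G) := by
      have h1 : ContDiff ℝ 1 (fderiv ℝ G) := hG.fderiv_right (le_refl _)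
      have h2 : gradient G = fun t =>
          (InnerProductSpace.toDual ℝ (Euc n)).symm (fderiv ℝ G t) := rfl
      rw [h2]
      exact (InnerProductSpace.toDual ℝ (Euc n)).symm.differentiable.comp
        (h1.differentiable one_ne_zero)
    have heq : (fun s' => gradient (fun s'' => E s'' x) s') =
        fun s' => gradient G s' - x - A s' := funext hgradE
    rw [heq]
    have hAd : HasFDerivAt (fun s' : Euc n => A s') A s := A.hasFDerivAt
    have hGd : HasFDerivAt (gradient G) (fderiv ℝ (gradient G) s) s :=
      (hgradGdiff s).hasFDerivAt
    have hc : HasFDerivAt (fun _ : Euc n => x) (0 : Euc n →L[ℝ] Euc n) s :=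
      hasFDerivAt_const x s
    have := (hGd.sub hc).sub hAd
    rw [sub_zero] at this
    exact this.fderiv
  · -- invertibility
    intro s μ hD hAlt
    -- reuse hessian computation
    have hHess : fderiv ℝ (fun s' => gradient (fun s'' => E s'' x) s') s =
        fderiv ℝ (gradient G) s - A := by
      have hgradGdiff : Differentiable ℝ (gradient G) := by
        have h1 : ContDiff ℝ 1 (fderiv ℝ G) := hG.fderiv_right (le_refl _)
        have h2 : gradient G = fun t =>
            (InnerProductSpace.toDual ℝ (Euc n)).symm (fderiv ℝ G t) := rfl
        rw [h2]
        exact (InnerProductSpace.toDual ℝ (Euc n)).symm.differentiable.comp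
          (h1.differentiable one_ne_zero)
      have heq : (fun s' => gradient (fun s'' => E s'' x) s') =
          fun s' => gradient G s' - x - A s' := funext hgradE
      rw [heq]
      have hAd : HasFDerivAt (fun s' : Euc n => A s') A s := A.hasFDerivAt
      have hGd : HasFDerivAt (gradient G) (fderiv ℝ (gradient G) s) s :=
        (hgradGdiff s).hasFDerivAt
      have hc : HasFDerivAt (fun _ : Euc n => x) (0 : Euc n →L[ℝ] Euc n) s :=
        hasFDerivAt_const x s
      have := (hGd.sub hc).sub hAd
      rw [sub_zero] at this
      exact this.fderiv
    rw [hHess]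
    set T : Euc n →L[ℝ] Euc n := fderiv ℝ (gradient G) s - A with hT
    have hinj : Function.Injective T := by
      rw [← ContinuousLinearMap.coe_coe T]
      rw [injective_iff_map_eq_zero (T : Euc n →ₗ[ℝ] Euc n)] at *
      intro v hv
      by_contra hv0
      have hTv : (fderiv ℝ (gradient G) s) v - A v = 0 := hv
      have : ⟪v, (fderiv ℝ (gradient G) s) v⟫ = ⟪v, A v⟫ := by
        rw [sub_eq_zero] at hTv
        rw [hTv]
      have h1 := hD v
      have h2 := hAlt v hv0
      linarith [h1, h2, this]
    have hsurj : Function.Surjective T := by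
      rw [← ContinuousLinearMap.coe_coe T] at *
      exact LinearMap.injective_iff_surjective.mp hinj
    exact ⟨hinj, hsurj⟩
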